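/- Let v = (x_1, …, x_n) ∈ ([−1,1]∖{0})^n with n odd and with the number of indices i such that sign(x_i) = −1 odd. Then b_1(v) + 1 = b_{−1}(v), where for l ∈ {+1, −1}, b_l(v) is the number of canonical pairs (i,j) ∈ K_v with s(i,j) = l and with i = 1 or j = n. -/

import Mathlib

open Finset

/-- The product sign `s(i,j) = ∏_{k=i}^{j} sign(x_k)`. -/
noncomputable def psign (x : ℕ → ℝ) (i j : ℕ) : ℝ :=
  ∏ k ∈ Finset.Icc i j, Real.sign (x k)

open Classical in
/-- The set `K_v` of canonical index pairs: `s(i,j) = (-1)^(i+j+1)`. -/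
noncomputable def Kv (n : ℕ) (x : ℕ → ℝ) : Finset (ℕ × ℕ) :=
  (Finset.Icc 1 n ×ˢ Finset.Icc 1 n).filter
    (fun q => q.1 ≤ q.2 ∧ psign x q.1 q.2 = (-1 : ℝ) ^ (q.1 + q.2 + 1))

open Classical in
/-- `b_l(v)` : the number of canonical pairs `(i,j)` with `s(i,j) = l` and
`i = 1` or `j = n`. -/
noncomputable def bcount (n : ℕ) (x : ℕ → ℝ) (l : ℝ) : ℕ :=
  ((Kv n x).filter (fun q => psign x q.1 q.2 = l ∧ (q.1 = 1 ∨ q.2 = n))).card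

lemma psign_mul (x : ℕ → ℝ) {j n : ℕ} (h : j ≤ n) :
    psign x 1 j * psign x (j + 1) n = psign x 1 n := by
  unfold psign
  rw [show (1 : ℕ) = 0 + 1 from rfl, Finset.Icc_add_one_left_eq_Ioc, zero_add, Finset.Icc_add_one_left_eq_Ioc]
  exact Finset.prod_Ioc_consecutive _ (Nat.zero_le j) h

lemma neg_one_pow_sq (j : ℕ) : ((-1 : ℝ) ^ j) * ((-1 : ℝ) ^ j) = 1 := by
  rw [← pow_add]
  exact Even.neg_one_pow ⟨j, rfl⟩

open Classical in
theorem boundary_sign_count (n : ℕ) (x : ℕ → ℝ) (hn : Odd n)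
    (hx : ∀ i ∈ Finset.Icc 1 n, x i ∈ Set.Icc (-1 : ℝ) 1 ∧ x i ≠ 0)
    (hneg : Odd ((Finset.Icc 1 n).filter (fun i => Real.sign (x i) = -1)).card) :
    bcount n x 1 + 1 = bcount n x (-1) := by
  have hn1 : 1 ≤ n := hn.pos
  -- the full product is -1
  have htop : psign x 1 n = -1 := by
    unfold psign
    rw [← Finset.prod_filter_mul_prod_filter_not (Finset.Icc 1 n)
      (fun i => Real.sign (x i) = -1)]
    have h1 : ∏ k ∈ (Finset.Icc 1 n).filter (fun i => Real.sign (x i) = -1),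
        Real.sign (x k) = (-1 : ℝ) ^ ((Finset.Icc 1 n).filter
          (fun i => Real.sign (x i) = -1)).card := by
      rw [Finset.prod_congr rfl (fun k hk => (Finset.mem_filter.mp hk).2),
        Finset.prod_const]
    have h2 : ∏ k ∈ (Finset.Icc 1 n).filter (fun i => ¬ Real.sign (x i) = -1),
        Real.sign (x k) = 1 := by
      apply Finset.prod_eq_one
      intro k hk
      rcases Finset.mem_filter.mp hk with ⟨hk1, hk2⟩
      rcases Real.sign_apply_eq_of_ne_zero (x k) (hx k hk1).2 with h | h
      · exact absurd h hk2
      · exact h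
    rw [h1, h2, hneg.neg_one_pow, mul_one]
  -- membership characterization
  have hmem : ∀ (l : ℝ) (q : ℕ × ℕ),
      q ∈ (Kv n x).filter (fun q => psign x q.1 q.2 = l ∧ (q.1 = 1 ∨ q.2 = n)) ↔
      (1 ≤ q.1 ∧ q.2 ≤ n ∧ q.1 ≤ q.2 ∧
        psign x q.1 q.2 = (-1 : ℝ) ^ (q.1 + q.2 + 1) ∧ psign x q.1 q.2 = l ∧
        (q.1 = 1 ∨ q.2 = n)) := by
    intro l q
    simp only [Kv, Finset.mem_filter, Finset.mem_product, Finset.mem_Icc]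
    constructor
    · rintro ⟨⟨⟨⟨h1, h2⟩, h3, h4⟩, h5, h6⟩, h7, h8⟩
      exact ⟨h1, h4, h5, h6, h7, h8⟩
    · rintro ⟨h1, h2, h3, h4, h5, h6⟩
      exact ⟨⟨⟨⟨h1, le_trans h3 h2⟩, le_trans h1 h3, h2⟩, h3, h4⟩, h5, h6⟩
  set S1 := (Kv n x).filter (fun q => psign x q.1 q.2 = 1 ∧ (q.1 = 1 ∨ q.2 = n)) with hS1
  set S2 := (Kv n x).filter (fun q => psign x q.1 q.2 = -1 ∧ (q.1 = 1 ∨ q.2 = n)) with hS2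
  have h1n : (1, n) ∈ S2 := by
    rw [hmem]
    refine ⟨le_refl 1, le_refl n, hn1, ?_, htop, Or.inl rfl⟩
    rw [htop]
    have : Odd (1 + n + 1) := by
      rcases hn with ⟨k, hk⟩
      exact ⟨k + 1, by omega⟩
    rw [this.neg_one_pow]
  -- the involution
  set φ : ℕ × ℕ → ℕ × ℕ := fun q => if q.1 = 1 then (q.2 + 1, n) else (1, q.1 - 1) with hφ
  -- key step lemmas
  have hstep1 : ∀ j, 1 ≤ j → j < n → psign x 1 j = (-1 : ℝ) ^ j →
      psign x (j + 1) n = (-1 : ℝ) ^ (j + 1) := by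
    intro j hj1 hjn hpj
    have hm := psign_mul x (le_of_lt hjn)
    rw [hpj, htop] at hm
    have := neg_one_pow_sq j
    calc psign x (j + 1) n = ((-1 : ℝ) ^ j * (-1) ^ j) * psign x (j + 1) n := by
          rw [this, one_mul]
      _ = (-1 : ℝ) ^ j * ((-1 : ℝ) ^ j * psign x (j + 1) n) := by ring
      _ = (-1 : ℝ) ^ j * (-1) := by rw [hm]
      _ = (-1 : ℝ) ^ (j + 1) := by rw [pow_succ]
  have hstep2 : ∀ i, 2 ≤ i → i ≤ n → psign x i n = (-1 : ℝ) ^ i →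
      psign x 1 (i - 1) = (-1 : ℝ) ^ (i - 1) := by
    intro i hi2 hin hpi
    have hi1 : i - 1 + 1 = i := by omega
    have hm := psign_mul x (show i - 1 ≤ n by omega)
    rw [hi1, hpi, htop] at hm
    have hsq := neg_one_pow_sq i
    have : psign x 1 (i - 1) = (-1 : ℝ) ^ (i + 1) := by
      calc psign x 1 (i - 1) = psign x 1 (i - 1) * ((-1 : ℝ) ^ i * (-1) ^ i) := by
            rw [hsq, mul_one]
        _ = (psign x 1 (i - 1) * (-1 : ℝ) ^ i) * (-1 : ℝ) ^ i := by ring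
        _ = (-1) * (-1 : ℝ) ^ i := by rw [hm]
        _ = (-1 : ℝ) ^ (i + 1) := by rw [pow_succ]; ring
    rw [this]
    have : i + 1 = (i - 1) + 2 := by omega
    rw [this, pow_add]
    norm_num
  -- power helpers
  have hpow2 : ∀ m : ℕ, (-1 : ℝ) ^ (m + 2) = (-1) ^ m := by
    intro m; rw [pow_add]; norm_num
  have hpowN : ∀ m : ℕ, (-1 : ℝ) ^ (m + n + 1) = (-1) ^ m := by
    intro m
    rw [show m + n + 1 = m + (n + 1) by ring, pow_add, Even.neg_one_pow hn.add_one, mul_one]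
  -- forward map property
  have hi : ∀ q ∈ S1, φ q ∈ S2.erase (1, n) := by
    intro q hq
    rw [hmem] at hq
    obtain ⟨ha, hb, hc, hd, he, hf⟩ := hq
    rw [Finset.mem_erase]
    by_cases h1 : q.1 = 1
    · have hd' : psign x 1 q.2 = (-1 : ℝ) ^ q.2 := by
        rw [← h1, hd, h1, show 1 + q.2 + 1 = q.2 + 2 by ring, hpow2]
      have hsgn : (-1 : ℝ) ^ q.2 = 1 := by rw [← hd', ← h1, he]
      have hlt : q.2 < n := by
        rcases lt_or_eq_of_le hb with h | h
        · exact h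
        · exfalso; rw [h1, h, htop] at he; norm_num at he
      have hs := hstep1 q.2 (h1 ▸ hc) hlt hd'
      have hφq : φ q = (q.2 + 1, n) := by simp [hφ, h1]
      rw [hφq]
      constructor
      · simp only [ne_eq, Prod.mk.injEq, not_and]
        intro h'; omega
      · rw [hmem]
        refine ⟨by omega, le_refl n, by omega, ?_, ?_, Or.inr rfl⟩
        · rw [hs, hpowN]
        · rw [hs, pow_succ, hsgn, one_mul]
    · have h2 : q.2 = n := hf.resolve_left h1
      have hi2 : 2 ≤ q.1 := by omega
      have hd' : psign x q.1 n = (-1 : ℝ) ^ q.1 := by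
        rw [← h2, hd, h2, hpowN]
      have hsgn : (-1 : ℝ) ^ q.1 = 1 := by rw [← hd', ← h2, he]
      have hs := hstep2 q.1 hi2 (h2 ▸ hc) hd'
      have hφq : φ q = (1, q.1 - 1) := by simp [hφ, h1]
      rw [hφq]
      constructor
      · simp only [ne_eq, Prod.mk.injEq, not_and]
        intro _; omega
      · rw [hmem]
        refine ⟨le_refl 1, by omega, by omega, ?_, ?_, Or.inl rfl⟩
        · rw [hs, show 1 + (q.1 - 1) + 1 = (q.1 - 1) + 2 by omega, hpow2]
        · have : (-1 : ℝ) ^ (q.1 - 1) * (-1) = 1 := by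
            rw [← pow_succ, show q.1 - 1 + 1 = q.1 by omega, hsgn]
          rw [hs]; linarith
  -- backward map property
  have hj : ∀ q ∈ S2.erase (1, n), φ q ∈ S1 := by
    intro q hq
    rw [Finset.mem_erase, hmem] at hq
    obtain ⟨hne, ha, hb, hc, hd, he, hf⟩ := hq
    by_cases h1 : q.1 = 1
    · have h2 : q.2 ≠ n := by
        intro h'; exact hne (Prod.ext h1 h')
      have hlt : q.2 < n := lt_of_le_of_ne hb h2
      have hd' : psign x 1 q.2 = (-1 : ℝ) ^ q.2 := by
        rw [← h1, hd, h1, show 1 + q.2 + 1 = q.2 + 2 by ring, hpow2]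
      have hsgn : (-1 : ℝ) ^ q.2 = -1 := by rw [← hd', ← h1, he]
      have hs := hstep1 q.2 (h1 ▸ hc) hlt hd'
      have hφq : φ q = (q.2 + 1, n) := by simp [hφ, h1]
      rw [hφq, hmem]
      refine ⟨by omega, le_refl n, by omega, ?_, ?_, Or.inr rfl⟩
      · rw [hs, hpowN]
      · rw [hs, pow_succ, hsgn]; norm_num
    · have h2 : q.2 = n := hf.resolve_left h1
      have hi2 : 2 ≤ q.1 := by omega
      have hd' : psign x q.1 n = (-1 : ℝ) ^ q.1 := by
        rw [← h2, hd, h2, hpowN]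
      have hsgn : (-1 : ℝ) ^ q.1 = -1 := by rw [← hd', ← h2, he]
      have hs := hstep2 q.1 hi2 (h2 ▸ hc) hd'
      have hφq : φ q = (1, q.1 - 1) := by simp [hφ, h1]
      rw [hφq, hmem]
      refine ⟨le_refl 1, by omega, by omega, ?_, ?_, Or.inl rfl⟩
      · rw [hs, show 1 + (q.1 - 1) + 1 = (q.1 - 1) + 2 by omega, hpow2]
      · have : (-1 : ℝ) ^ (q.1 - 1) * (-1) = -1 := by
          rw [← pow_succ, show q.1 - 1 + 1 = q.1 by omega, hsgn]
        rw [hs]; linarith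
  -- involution
  have hinv : ∀ q : ℕ × ℕ, 1 ≤ q.1 → 1 ≤ q.2 → (q.1 = 1 ∨ q.2 = n) → φ (φ q) = q := by
    intro q h1 h1' h2
    by_cases hq : q.1 = 1
    · have hφq : φ q = (q.2 + 1, n) := by simp [hφ, hq]
      rw [hφq]
      have hφ2 : φ (q.2 + 1, n) = (1, q.2 + 1 - 1) := by
        simp only [hφ]
        rw [if_neg (show ¬ ((q.2 + 1, n) : ℕ × ℕ).1 = 1 by show ¬ (q.2 + 1 = 1); omega)]
      rw [hφ2]
      exact Prod.ext hq.symm (by simp)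
    · have h2' : q.2 = n := h2.resolve_left hq
      have hφq : φ q = (1, q.1 - 1) := by simp [hφ, hq]
      rw [hφq]
      have hφ2 : φ (1, q.1 - 1) = (q.1 - 1 + 1, n) := by simp [hφ]
      rw [hφ2]
      exact Prod.ext (by omega) h2'.symm
  have hcard : S1.card = (S2.erase (1, n)).card := by
    apply Finset.card_bij' (fun q _ => φ q) (fun q _ => φ q) hi hj
    · intro a ha
      rw [hmem] at ha
      exact hinv a ha.1 (le_trans ha.1 ha.2.2.1) ha.2.2.2.2.2
    · intro a ha
      rw [Finset.mem_erase, hmem] at ha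
      exact hinv a ha.2.1 (le_trans ha.2.1 ha.2.2.2.1) ha.2.2.2.2.2.2
  have hfinal : S2.card = (S2.erase (1, n)).card + 1 :=
    (Finset.card_erase_add_one h1n).symm
  show S1.card + 1 = S2.card
  rw [hfinal, hcard]
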